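/- Let d, n_o, n_u be positive integers with n = n_o + n_u, let λ > 0, P₁ ∈ [0,1], let x_1, ..., x_{n_o} ∈ ℝ^d be labeled observations with labels y_1, ..., y_{n_o} ∈ {-1,1} such that y_i = -1 for some i and y_j = 1 for some j, and let x_1^u, ..., x_{n_u}^u ∈ ℝ^d be unlabeled observations. Then the semi-supervised unnormalized posterior h(β₀, β) = [∏_{i=1}^{n_u} ( P₁ exp(-V(β₀ + (x_i^u)ᵀβ)) + (1-P₁) exp(-V(-β₀ - (x_i^u)ᵀβ)) )] · [∏_{i=1}^{n_o} exp(-V(y_i(β₀ + x_iᵀβ)))] · exp(-(λn/2)‖β‖₂²) is integrable over (β₀, β) ∈ ℝ × ℝ^d. -/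

import Mathlib

set_option maxHeartbeats 1000000

open MeasureTheory
open scoped RealInnerProductSpace

/-- The DWD loss function. -/
noncomputable def V (u : ℝ) : ℝ := if u ≤ 1/2 then 1 - u else 1/(4*u)

lemma V_nonneg (u : ℝ) : 0 ≤ V u := by
  unfold V
  split_ifs with h
  · linarith
  · push_neg at h
    have : (0:ℝ) < u := by linarith
    positivity

lemma V_ge (u : ℝ) : -u/2 ≤ V u := by
  unfold V
  split_ifs with h
  · linarith
  · push_neg at h
    have hu : (0:ℝ) < u := by linarith
    have : (0:ℝ) < 1/(4*u) := by positivity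
    nlinarith

lemma V_measurable : Measurable V := by
  unfold V
  exact Measurable.ite (measurableSet_le measurable_id measurable_const)
    (measurable_const.sub measurable_id)
    (measurable_const.div (measurable_const.mul measurable_id))

lemma integrable_exp_neg_half_abs :
    Integrable (fun x : ℝ => Real.exp (-(2⁻¹ : ℝ) * |x|)) := by
  rw [← integrableOn_univ, ← Set.Iio_union_Ici (a := (0:ℝ)), integrableOn_union,
    integrableOn_Ici_iff_integrableOn_Ioi]
  have base : IntegrableOn (fun x : ℝ => Real.exp (-(2⁻¹ : ℝ) * |x|)) (Set.Ioi 0) := by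
    apply (exp_neg_integrableOn_Ioi 0 (by norm_num : (0:ℝ) < 2⁻¹)).congr_fun
    · intro x hx
      simp [abs_of_pos (Set.mem_Ioi.mp hx)]
    · exact measurableSet_Ioi
  refine ⟨?_, base⟩
  rw [← (Measure.measurePreserving_neg (volume : Measure ℝ)).integrableOn_comp_preimage
      (Homeomorph.neg ℝ).measurableEmbedding]
  simp only [Function.comp_def, abs_neg, Set.neg_preimage, Set.neg_Iio, neg_zero]
  exact base

lemma integrable_gauss_eucl {d : ℕ} {b : ℝ} (hb : 0 < b) :
    Integrable (fun v : EuclideanSpace ℝ (Fin d) => Real.exp (-b * ‖v‖^2)) := by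
  have h := (GaussianFourier.integrable_cexp_neg_mul_sq_norm_add_of_euclideanSpace
    (b := (b:ℂ)) (by simpa using hb) 0 (0 : EuclideanSpace ℝ (Fin d))).norm
  apply h.congr
  filter_upwards with v
  have heq : (-(b:ℂ) * (‖v‖:ℂ)^2 + 0 * (⟪(0 : EuclideanSpace ℝ (Fin d)), v⟫ : ℝ)) =
      ((-b * ‖v‖^2 : ℝ) : ℂ) := by push_cast; ring
  rw [heq, Complex.norm_exp, Complex.ofReal_re]

/-- the semi-supervised unnormalized Bayesian DWD posterior,
with `n_o` labeled observations and `n_u` unlabeled observations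
(`n = n_o + n_u`), is integrable over `(β₀, β) ∈ ℝ × ℝ^d`. -/
theorem dwd_semisupervised_posterior_proper (d no nu n : ℕ)
    (hd : 0 < d) (hno : 0 < no) (hnu : 0 < nu) (hntot : n = no + nu)
    (lam : ℝ) (hlam : 0 < lam) (P₁ : ℝ) (hP₁ : P₁ ∈ Set.Icc (0:ℝ) 1)
    (x : Fin no → EuclideanSpace ℝ (Fin d))
    (y : Fin no → ℝ) (hy : ∀ i, y i = -1 ∨ y i = 1)
    (hneg : ∃ i, y i = -1) (hpos : ∃ j, y j = 1)
    (xu : Fin nu → EuclideanSpace ℝ (Fin d)) :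
    Integrable (fun p : ℝ × EuclideanSpace ℝ (Fin d) =>
      (∏ i, (P₁ * Real.exp (-V (p.1 + ⟪xu i, p.2⟫)) +
          (1 - P₁) * Real.exp (-V (-p.1 - ⟪xu i, p.2⟫)))) *
        (∏ i, Real.exp (-V (y i * (p.1 + ⟪x i, p.2⟫)))) *
          Real.exp (-(lam * n / 2) * ‖p.2‖^2)) := by
  obtain ⟨i₀, hi₀⟩ := hneg
  obtain ⟨j₀, hj₀⟩ := hpos
  have hij : i₀ ≠ j₀ := by
    intro h; rw [h, hj₀] at hi₀; norm_num at hi₀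
  set c : ℝ := lam * n / 2 with hc
  have hn1 : (1:ℝ) ≤ n := by
    have : 0 < n := by omega
    exact_mod_cast this
  have hcpos : 0 < c := by
    have : (0:ℝ) < n := by linarith
    positivity
  set C : ℝ := max ‖x i₀‖ ‖x j₀‖ with hC
  have hC0 : 0 ≤ C := le_trans (norm_nonneg _) (le_max_left _ _)
  set K : ℝ := (C/2)^2/(2*c) with hK
  -- the dominating function is integrable
  have hg : Integrable (fun p : ℝ × EuclideanSpace ℝ (Fin d) =>
      Real.exp (-(2⁻¹:ℝ) * |p.1|) * Real.exp ((C/2) * ‖p.2‖ - c * ‖p.2‖^2)) := by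
    have h2 : Integrable (fun v : EuclideanSpace ℝ (Fin d) =>
        Real.exp ((C/2) * ‖v‖ - c * ‖v‖^2)) := by
      apply Integrable.mono' ((integrable_gauss_eucl (d := d)
        (b := c/2) (by positivity)).const_mul (Real.exp K))
      · apply Continuous.aestronglyMeasurable
        exact (((continuous_const.mul continuous_norm).sub
          (continuous_const.mul (continuous_norm.pow 2))).rexp)
      · filter_upwards with v
        rw [Real.norm_eq_abs, abs_of_pos (Real.exp_pos _), ← Real.exp_add]
        apply Real.exp_le_exp.2
        have h1 : (C/2) * ‖v‖ ≤ (c/2) * ‖v‖^2 + K := by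
          rw [hK]
          have hkey : (c/2) * ‖v‖^2 + (C/2)^2/(2*c) - (C/2) * ‖v‖ =
              (c * ‖v‖ - C/2)^2/(2*c) := by
            field_simp
            ring
          nlinarith [div_nonneg (sq_nonneg (c * ‖v‖ - C/2)) (by linarith : (0:ℝ) ≤ 2*c)]
        nlinarith [sq_nonneg ‖v‖]
    have := Integrable.mul_prod (L := ℝ) integrable_exp_neg_half_abs h2
    rwa [← Measure.volume_eq_prod] at this
  apply hg.mono'
  · -- measurability
    apply Measurable.aestronglyMeasurable
    have hVm := V_measurable
    have hfst : Measurable fun p : ℝ × EuclideanSpace ℝ (Fin d) => p.1 := measurable_fst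
    have hinner : ∀ w : EuclideanSpace ℝ (Fin d),
        Measurable fun p : ℝ × EuclideanSpace ℝ (Fin d) => (⟪w, p.2⟫ : ℝ) := fun w =>
      (continuous_const.inner continuous_snd).measurable
    apply Measurable.mul
    apply Measurable.mul
    · apply Finset.measurable_prod
      intro i _
      exact (measurable_const.mul
          ((hVm.comp (hfst.add (hinner (xu i)))).neg.exp)).add
        (measurable_const.mul
          ((hVm.comp (hfst.neg.sub (hinner (xu i)))).neg.exp))
    · apply Finset.measurable_prod
      intro i _
      exact (hVm.comp (measurable_const.mul (hfst.add (hinner (x i))))).neg.exp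
    · exact ((continuous_const.mul (continuous_snd.norm.pow 2)).rexp).measurable
  · -- pointwise bound
    filter_upwards with p
    obtain ⟨b0, β⟩ := p
    simp only
    have hP0 : 0 ≤ P₁ := hP₁.1
    have hP1 : P₁ ≤ 1 := hP₁.2
    have hu1 : (∏ i, (P₁ * Real.exp (-V (b0 + ⟪xu i, β⟫)) +
        (1 - P₁) * Real.exp (-V (-b0 - ⟪xu i, β⟫)))) ≤ 1 := by
      apply Finset.prod_le_one
      · intro i _
        exact add_nonneg (mul_nonneg hP0 (Real.exp_pos _).le)
          (mul_nonneg (by linarith) (Real.exp_pos _).le)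
      · intro i _
        have e1 : Real.exp (-V (b0 + ⟪xu i, β⟫)) ≤ 1 := by
          rw [Real.exp_le_one_iff]; simpa using V_nonneg _
        have e2 : Real.exp (-V (-b0 - ⟪xu i, β⟫)) ≤ 1 := by
          rw [Real.exp_le_one_iff]; simpa using V_nonneg _
        nlinarith [Real.exp_pos (-V (b0 + ⟪xu i, β⟫)), Real.exp_pos (-V (-b0 - ⟪xu i, β⟫))]
    have hu0 : 0 ≤ (∏ i, (P₁ * Real.exp (-V (b0 + ⟪xu i, β⟫)) +
        (1 - P₁) * Real.exp (-V (-b0 - ⟪xu i, β⟫)))) := by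
      apply Finset.prod_nonneg
      intro i _
      exact add_nonneg (mul_nonneg hP0 (Real.exp_pos _).le)
        (mul_nonneg (by linarith) (Real.exp_pos _).le)
    have hlab : (∏ i, Real.exp (-V (y i * (b0 + ⟪x i, β⟫)))) ≤
        Real.exp (-(2⁻¹:ℝ) * |b0| + (C/2) * ‖β‖) := by
      rw [← Real.exp_sum]
      apply Real.exp_le_exp.2
      have hsub : ({i₀, j₀} : Finset (Fin no)) ⊆ Finset.univ := Finset.subset_univ _
      have hsum : ∑ i ∈ ({i₀, j₀} : Finset (Fin no)), V (y i * (b0 + ⟪x i, β⟫)) ≤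
          ∑ i, V (y i * (b0 + ⟪x i, β⟫)) :=
        Finset.sum_le_sum_of_subset_of_nonneg hsub (fun i _ _ => V_nonneg _)
      rw [Finset.sum_pair hij, hi₀, hj₀] at hsum
      have hpair : (2⁻¹:ℝ) * |b0| - (C/2) * ‖β‖ ≤
          V ((-1) * (b0 + ⟪x i₀, β⟫)) + V (1 * (b0 + ⟪x j₀, β⟫)) := by
        have ha : |⟪x i₀, β⟫| ≤ C * ‖β‖ := by
          refine le_trans (abs_real_inner_le_norm _ _) ?_
          exact mul_le_mul_of_nonneg_right (le_max_left _ _) (norm_nonneg _)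
        have hb : |⟪x j₀, β⟫| ≤ C * ‖β‖ := by
          refine le_trans (abs_real_inner_le_norm _ _) ?_
          exact mul_le_mul_of_nonneg_right (le_max_right _ _) (norm_nonneg _)
        have v1 := V_ge ((-1) * (b0 + ⟪x i₀, β⟫))
        have v2 := V_ge (1 * (b0 + ⟪x j₀, β⟫))
        have v1' := V_nonneg ((-1) * (b0 + ⟪x i₀, β⟫))
        have v2' := V_nonneg (1 * (b0 + ⟪x j₀, β⟫))
        rcases abs_cases b0 with ⟨h, _⟩ | ⟨h, _⟩ <;>
          rcases abs_cases (⟪x i₀, β⟫ : ℝ) with ⟨ha1, _⟩ | ⟨ha1, _⟩ <;>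
          rcases abs_cases (⟪x j₀, β⟫ : ℝ) with ⟨hb1, _⟩ | ⟨hb1, _⟩ <;>
          rw [h] <;> nlinarith
      have hneg : (∑ i, -V (y i * (b0 + ⟪x i, β⟫))) =
          -(∑ i, V (y i * (b0 + ⟪x i, β⟫))) := by
        rw [Finset.sum_neg_distrib]
      rw [hneg]
      linarith
    have hlab0 : 0 ≤ (∏ i, Real.exp (-V (y i * (b0 + ⟪x i, β⟫)))) :=
      Finset.prod_nonneg fun i _ => (Real.exp_pos _).le
    have hexp0 : (0:ℝ) < Real.exp (-(lam * n / 2) * ‖β‖^2) := Real.exp_pos _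
    rw [Real.norm_eq_abs, abs_of_nonneg (by positivity)]
    calc (∏ i, (P₁ * Real.exp (-V (b0 + ⟪xu i, β⟫)) +
          (1 - P₁) * Real.exp (-V (-b0 - ⟪xu i, β⟫)))) *
        (∏ i, Real.exp (-V (y i * (b0 + ⟪x i, β⟫)))) *
          Real.exp (-(lam * n / 2) * ‖β‖^2)
        ≤ 1 * Real.exp (-(2⁻¹:ℝ) * |b0| + (C/2) * ‖β‖) *
            Real.exp (-(lam * n / 2) * ‖β‖^2) := by
          apply mul_le_mul_of_nonneg_right _ hexp0.le
          exact mul_le_mul hu1 hlab hlab0 zero_le_one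
      _ = Real.exp (-(2⁻¹:ℝ) * |b0|) * Real.exp ((C/2) * ‖β‖ - c * ‖β‖^2) := by
          rw [one_mul, ← Real.exp_add, ← Real.exp_add, hc]
          ring_nf
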